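/- arXiv:1604.05825 — 2 statements merged into one kernel-verified Lean document; each statement's English description precedes it below -/
import Mathlib

section
/- Let m ≥ 2 and O, O', O_1, O_2, …, O_{2t} ∈ O(P_m), t ≥ 1, with O ~w O_1 ~p O_2 ~w O_3 ~p O_4 ~w ⋯ ~w O_{2t−1} ~p O_{2t} ~w O'. Then there exist O_0', Õ_0 ∈ O(P_m) such that O ~p O_0' ~w O' and O ~w Õ_0 ~p O'. Moreover, if O_{2r} = O_{2r−1}(q_r) for 1 ≤ r ≤ t, then O_0' = O(q) and O' = Õ_0(q), where q = q_t ∘ q_{t−1} ∘ ⋯ ∘ q_1. -/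
namespace BlockJacobi

open scoped BigOperators

attribute [local instance] Classical.propDecidable

noncomputable section

/-- Offset (starting index) of block `r` for the partition `c`. -/
def off (c : ℕ → ℕ) (r : ℕ) : ℕ := ∑ k ∈ Finset.range r, c k

/-- `t` belongs to block `r`. -/
def inBlk (c : ℕ → ℕ) (r t : ℕ) : Prop := off c r ≤ t ∧ t < off c r + c r

/-- `s` and `t` belong to the same block (among the first `m` blocks). -/
def sameBlk (c : ℕ → ℕ) (m s t : ℕ) : Prop := ∃ r, r < m ∧ inBlk c r s ∧ inBlk c r t

/-- `t` belongs to the pivot zone: block `i` or block `j`. -/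
def inPiv (c : ℕ → ℕ) (i j t : ℕ) : Prop := inBlk c i t ∨ inBlk c j t

/-- `(c, m)` is a partition of `n` into `m` blocks (0-based blocks `0,…,m-1`). -/
def IsPartition (n m : ℕ) (c : ℕ → ℕ) : Prop :=
  2 ≤ m ∧ (∀ i < m, 1 ≤ c i) ∧ ∑ i ∈ Finset.range m, c i = n

/-- elementary block matrix with (0-based) pivot pair `(i,j)`. -/
def IsElem {n : ℕ} (c : ℕ → ℕ) (i j : ℕ) (U : Matrix (Fin n) (Fin n) ℝ) : Prop :=
  ∀ s t : Fin n, ¬(inPiv c i j (s : ℕ) ∧ inPiv c i j (t : ℕ)) →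
    U s t = if s = t then 1 else 0

/-- orthogonality. -/
def Orth {n : ℕ} (U : Matrix (Fin n) (Fin n) ℝ) : Prop := U.transpose * U = 1

/-- Euclidean norm of a vector. -/
def enorm {ι : Type*} [Fintype ι] (x : ι → ℝ) : ℝ := Real.sqrt (∑ i, x i ^ 2)

/-- smallest singular value of the `(r,r)` diagonal block of `U`. -/
def sigmaMinBlk {n : ℕ} (c : ℕ → ℕ) (r : ℕ) (U : Matrix (Fin n) (Fin n) ℝ) : ℝ :=
  sInf { v : ℝ | ∃ x : Fin n → ℝ,
    (∀ t : Fin n, ¬ inBlk c r (t : ℕ) → x t = 0) ∧ enorm x = 1 ∧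
    enorm (fun t : Fin n => if inBlk c r (t : ℕ) then U.mulVec x t else 0) = v }

/-- the constant `γ_{ij}` of the UBC class. -/
def gammaUBC (c : ℕ → ℕ) (i j : ℕ) : ℝ :=
  3 / Real.sqrt (((4 : ℝ) ^ c i + 6 * (c j : ℝ) - 1) * ((c j : ℝ) + 1))

/-- `U` is in the UBC class with pivot pair `(i,j)`: block structure given by `cs`,
`γ`-bound computed from the partition `cg`. -/
def IsUBC2 {n : ℕ} (cs cg : ℕ → ℕ) (ρ : ℝ) (i j : ℕ) (U : Matrix (Fin n) (Fin n) ℝ) : Prop :=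
  IsElem cs i j U ∧ Orth U ∧ sigmaMinBlk cs i U = sigmaMinBlk cs j U ∧
    ρ * gammaUBC cg i j ≤ sigmaMinBlk cs i U

/-- `U ∈ UBC_π(ρ)` with pivot pair `(i,j)`. -/
def IsUBC {n : ℕ} (c : ℕ → ℕ) (ρ : ℝ) (i j : ℕ) (U : Matrix (Fin n) (Fin n) ℝ) : Prop :=
  IsUBC2 c c ρ i j U

/-- the `(i,j)` pivot submatrix of `A` is diagonal. -/
def PivDiag {n : ℕ} (c : ℕ → ℕ) (i j : ℕ) (A : Matrix (Fin n) (Fin n) ℝ) : Prop :=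
  ∀ s t : Fin n, s ≠ t → inPiv c i j (s : ℕ) → inPiv c i j (t : ℕ) → A s t = 0

/-- square of the off-norm `S(A)`. -/
def offSq {n : ℕ} (A : Matrix (Fin n) (Fin n) ℝ) : ℝ :=
  ∑ s : Fin n, ∑ t : Fin n, if (s : ℕ) < (t : ℕ) then A s t ^ 2 else 0

/-- square of the off-norm of the `(i,j)` pivot submatrix of `A`. -/
def offSqPiv {n : ℕ} (c : ℕ → ℕ) (i j : ℕ) (A : Matrix (Fin n) (Fin n) ℝ) : ℝ :=
  ∑ s : Fin n, ∑ t : Fin n,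
    if (s : ℕ) < (t : ℕ) ∧ inPiv c i j (s : ℕ) ∧ inPiv c i j (t : ℕ) then A s t ^ 2 else 0

/-- Frobenius norm. -/
def frob {n : ℕ} (A : Matrix (Fin n) (Fin n) ℝ) : ℝ :=
  Real.sqrt (∑ s : Fin n, ∑ t : Fin n, A s t ^ 2)

/-- One sweep of the block Jacobi method along the pivot list `L`; block structure from
`cs`, UBC bound computed from the partition `cg`. -/
def Sweep2 {n : ℕ} (cs cg : ℕ → ℕ) (ρ : ℝ) (L : List (ℕ × ℕ))
    (A A' : Matrix (Fin n) (Fin n) ℝ) : Prop :=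
  ∃ B : ℕ → Matrix (Fin n) (Fin n) ℝ,
    B 0 = A ∧ B L.length = A' ∧
    ∀ (k : ℕ) (hk : k < L.length),
      ∃ U : Matrix (Fin n) (Fin n) ℝ,
        IsUBC2 cs cg ρ (L.get ⟨k, hk⟩).1 (L.get ⟨k, hk⟩).2 U ∧
        B (k + 1) = U.transpose * B k * U ∧
        PivDiag cs (L.get ⟨k, hk⟩).1 (L.get ⟨k, hk⟩).2 (B (k + 1))

/-- One sweep of the block Jacobi method with `UBC_π(ρ)` transformations. -/
def Sweep {n : ℕ} (c : ℕ → ℕ) (ρ : ℝ) (L : List (ℕ × ℕ))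
    (A A' : Matrix (Fin n) (Fin n) ℝ) : Prop :=
  Sweep2 c c ρ L A A'

/-- `L ∈ O(P_m)` (0-based pairs). -/
def SeqOn (m : ℕ) (L : List (ℕ × ℕ)) : Prop :=
  (∀ p ∈ L, p.1 < p.2 ∧ p.2 < m) ∧ ∀ i j : ℕ, i < j → j < m → (i, j) ∈ L

/-- `L ∈ O(S)` for `S ⊆ P_m`. -/
def SeqOnSet (S : Set (ℕ × ℕ)) (L : List (ℕ × ℕ)) : Prop :=
  (∀ p ∈ L, p ∈ S) ∧ ∀ p ∈ S, p ∈ L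

/-- the class `B_c^(m)` of column-wise orderings (0-based). -/
def memBc (m : ℕ) (L : List (ℕ × ℕ)) : Prop :=
  ∃ τ : ℕ → ℕ → ℕ,
    (∀ j, Set.BijOn (τ j) (Set.Iio j) (Set.Iio j)) ∧
    L = (List.range' 1 (m - 1)).flatMap fun j => (List.range j).map fun a => (τ j a, j)

/-- the class `B_r^(m)` of row-wise orderings (0-based). -/
def memBr (m : ℕ) (L : List (ℕ × ℕ)) : Prop :=
  ∃ σ : ℕ → ℕ → ℕ,
    (∀ i, Set.BijOn (σ i) (Set.Ico (i + 1) m) (Set.Ico (i + 1) m)) ∧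
    L = ((List.range (m - 1)).reverse).flatMap fun i =>
      (List.range' (i + 1) (m - 1 - i)).map fun b => (i, σ i b)

/-- the class `B_sp^(m)` of serial orderings with permutations. -/
def memBsp (m : ℕ) (L : List (ℕ × ℕ)) : Prop :=
  memBc m L ∨ memBc m L.reverse ∨ memBr m L ∨ memBr m L.reverse

/-- the quasi-cyclic class `B̄_c^(m)`. -/
def memBcQ (m : ℕ) (L : List (ℕ × ℕ)) : Prop :=
  ∃ (τ : ℕ → ℕ → ℕ) (E : ℕ → List (ℕ × ℕ)),
    (∀ j, Set.BijOn (τ j) (Set.Iio j) (Set.Iio j)) ∧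
    (∀ j, ∀ p ∈ E j, p.1 < p.2 ∧ p.2 ≤ j) ∧
    L = (List.range' 1 (m - 1)).flatMap fun j =>
      ((List.range j).map fun a => (τ j a, j)) ++ (if j = 1 then [] else E j)

/-- one admissible transposition (on lists of `α`'s carrying pairs via `pr`). -/
def AdjSwapG {α : Type*} (pr : α → ℕ × ℕ) (L L' : List α) : Prop :=
  ∃ (l₁ l₂ : List α) (a b : α),
    ({(pr a).1, (pr a).2} ∩ {(pr b).1, (pr b).2} : Set ℕ) = ∅ ∧
    L = l₁ ++ a :: b :: l₂ ∧ L' = l₁ ++ b :: a :: l₂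

/-- equivalence (finitely many admissible transpositions). -/
def EquivG {α : Type*} (pr : α → ℕ × ℕ) : List α → List α → Prop :=
  Relation.ReflTransGen (AdjSwapG pr)

/-- shift-equivalence. -/
def ShiftG {α : Type*} (L L' : List α) : Prop :=
  ∃ l₁ l₂ : List α, L = l₁ ++ l₂ ∧ L' = l₂ ++ l₁

/-- weak equivalence. -/
def WeakG {α : Type*} (pr : α → ℕ × ℕ) : List α → List α → Prop :=
  Relation.ReflTransGen fun X Y => EquivG pr X Y ∨ ShiftG X Y

/-- equivalence of pivot sequences. -/
def PEquivL : List (ℕ × ℕ) → List (ℕ × ℕ) → Prop := EquivG id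

/-- shift-equivalence of pivot sequences. -/
def ShiftEq : List (ℕ × ℕ) → List (ℕ × ℕ) → Prop := ShiftG

/-- weak equivalence of pivot sequences. -/
def WeakEq : List (ℕ × ℕ) → List (ℕ × ℕ) → Prop := WeakG id

/-- weak equivalence realized by a chain containing exactly `d` shift-equivalent
adjacent pairs (all other adjacent pairs being equivalent). -/
def WeakChainD (d : ℕ) (L L' : List (ℕ × ℕ)) : Prop :=
  ∃ (r : ℕ) (cs : ℕ → List (ℕ × ℕ)) (s : Finset ℕ),
    cs 0 = L ∧ cs r = L' ∧ s.card = d ∧ (∀ k ∈ s, k < r) ∧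
    ∀ k < r, if k ∈ s then ShiftEq (cs k) (cs (k + 1)) else PEquivL (cs k) (cs (k + 1))

/-- `q` is a permutation of `{0,…,m-1}`. -/
def IsPermOn (m : ℕ) (q : ℕ → ℕ) : Prop := Set.BijOn q (Set.Iio m) (Set.Iio m)

/-- `O(q)`: apply a permutation to all pairs of the sequence. -/
def pApply (q : ℕ → ℕ) (L : List (ℕ × ℕ)) : List (ℕ × ℕ) :=
  L.map fun p => if q p.1 < q p.2 then (q p.1, q p.2) else (q p.2, q p.1)

/-- `compSeq q t = q_t ∘ q_{t-1} ∘ ⋯ ∘ q_1`. -/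
def compSeq (q : ℕ → ℕ → ℕ) : ℕ → ℕ → ℕ
  | 0 => id
  | t + 1 => q (t + 1) ∘ compSeq q t

/-- the class `B_spg^(m)`. -/
def memBspg (m : ℕ) (L : List (ℕ × ℕ)) : Prop :=
  ∃ L' L'' : List (ℕ × ℕ), memBsp m L'' ∧
    ((∃ q, IsPermOn m q ∧ L' = pApply q L) ∧ PEquivL L' L'' ∨
      PEquivL L L' ∧ ∃ q, IsPermOn m q ∧ L'' = pApply q L')

/-- the class `B_sg^(m)` of generalized serial orderings. -/
def memBsg (m : ℕ) (L : List (ℕ × ℕ)) : Prop :=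
  ∃ L' L'' : List (ℕ × ℕ), memBsp m L'' ∧
    ((∃ q, IsPermOn m q ∧ L' = pApply q L) ∧ WeakEq L' L'' ∨
      WeakEq L L' ∧ ∃ q, IsPermOn m q ∧ L'' = pApply q L')

/-- index set of the entries of the off-diagonal blocks in the upper triangle;
it has cardinality `K`. -/
def OffI (n m : ℕ) (c : ℕ → ℕ) : Type :=
  { p : Fin n × Fin n // (p.1 : ℕ) < (p.2 : ℕ) ∧ ¬ sameBlk c m (p.1 : ℕ) (p.2 : ℕ) }

instance (n m : ℕ) (c : ℕ → ℕ) : Fintype (OffI n m c) := by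
  unfold OffI; exact Subtype.fintype _

instance (n m : ℕ) (c : ℕ → ℕ) : DecidableEq (OffI n m c) := Classical.decEq _

/-- `vec_{π,0}⁻¹` : the symmetric matrix with zero diagonal blocks built from a vector. -/
def symOf {n m : ℕ} {c : ℕ → ℕ} (a : OffI n m c → ℝ) : Matrix (Fin n) (Fin n) ℝ :=
  fun s t =>
    if h : (s : ℕ) < (t : ℕ) ∧ ¬ sameBlk c m (s : ℕ) (t : ℕ) then a ⟨(s, t), h⟩
    else if h' : (t : ℕ) < (s : ℕ) ∧ ¬ sameBlk c m (t : ℕ) (s : ℕ) then a ⟨(t, s), h'⟩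
    else 0

/-- `N_{ij}` : set the pivot submatrix to zero. -/
def nij {n : ℕ} (c : ℕ → ℕ) (i j : ℕ) (M : Matrix (Fin n) (Fin n) ℝ) :
    Matrix (Fin n) (Fin n) ℝ :=
  fun s t => if inPiv c i j (s : ℕ) ∧ inPiv c i j (t : ℕ) then 0 else M s t

/-- the block Jacobi annihilator `R_{ij}(Û)` (as a `K×K` matrix), parametrized by the
full elementary block matrix `U` with pivot pair `(i,j)` and pivot submatrix `Û`. -/
def annih (n m : ℕ) (c : ℕ → ℕ) (i j : ℕ) (U : Matrix (Fin n) (Fin n) ℝ) :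
    Matrix (OffI n m c) (OffI n m c) ℝ :=
  fun p q => nij c i j (U.transpose * symOf (Pi.single q (1 : ℝ)) * U) p.1.1 p.1.2

/-- the class `I_{ij}` of block Jacobi annihilators. -/
def Iij (n m : ℕ) (c : ℕ → ℕ) (i j : ℕ) : Set (Matrix (OffI n m c) (OffI n m c) ℝ) :=
  { R | ∃ U : Matrix (Fin n) (Fin n) ℝ, IsElem c i j U ∧ Orth U ∧ R = annih n m c i j U }

/-- the class `I_{ij}^{UBC(ρ)}`. -/
def IijUBC (n m : ℕ) (c : ℕ → ℕ) (ρ : ℝ) (i j : ℕ) :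
    Set (Matrix (OffI n m c) (OffI n m c) ℝ) :=
  { R | ∃ U : Matrix (Fin n) (Fin n) ℝ, IsUBC c ρ i j U ∧ R = annih n m c i j U }

/-- the class `J_O^{UBC_π(ρ)}` of block Jacobi operators. -/
def JopUBC (n m : ℕ) (c : ℕ → ℕ) (ρ : ℝ) (L : List (ℕ × ℕ)) :
    Set (Matrix (OffI n m c) (OffI n m c) ℝ) :=
  { J | ∃ R : ℕ → Matrix (OffI n m c) (OffI n m c) ℝ,
      (∀ (k : ℕ) (hk : k < L.length),
        R k ∈ IijUBC n m c ρ (L.get ⟨k, hk⟩).1 (L.get ⟨k, hk⟩).2) ∧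
      J = (((List.range L.length).reverse).map R).prod }

/-- spectral norm (operator 2-norm). -/
def specNorm {ι : Type*} [Fintype ι] (M : Matrix ι ι ℝ) : ℝ :=
  sSup { v : ℝ | ∃ x : ι → ℝ, enorm x = 1 ∧ enorm (M.mulVec x) = v }

/-- spectral radius. -/
def specRad {ι : Type*} [Fintype ι] (M : Matrix ι ι ℝ) : ℝ :=
  sSup { v : ℝ | ∃ (μ : ℂ) (x : ι → ℂ), x ≠ 0 ∧
    (M.map (fun r : ℝ => (r : ℂ))).mulVec x = μ • x ∧ v = ‖μ‖ }

/-- product `R_{T-1} ⋯ R_1 R_0` of a decorated pivot list. -/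
def prodD {n m : ℕ} {c : ℕ → ℕ}
    (L : List ((ℕ × ℕ) × Matrix (OffI n m c) (OffI n m c) ℝ)) :
    Matrix (OffI n m c) (OffI n m c) ℝ :=
  ((L.map Prod.snd).reverse).prod

/-- plane (Givens) rotation in the `(i,j)` coordinate plane. -/
def rotM (n : ℕ) (i j : ℕ) (φ : ℝ) : Matrix (Fin n) (Fin n) ℝ :=
  fun s t =>
    if (s : ℕ) = i ∧ (t : ℕ) = i then Real.cos φ
    else if (s : ℕ) = j ∧ (t : ℕ) = j then Real.cos φ
    else if (s : ℕ) = i ∧ (t : ℕ) = j then - Real.sin φ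
    else if (s : ℕ) = j ∧ (t : ℕ) = i then Real.sin φ
    else if s = t then 1 else 0

/-- One sweep of the scalar (element-wise) cyclic Jacobi method with rotation
angles in `[-π/4, π/4]`. -/
def ScalarSweep {n : ℕ} (L : List (ℕ × ℕ)) (A A' : Matrix (Fin n) (Fin n) ℝ) : Prop :=
  ∃ (B : ℕ → Matrix (Fin n) (Fin n) ℝ) (φ : ℕ → ℝ),
    B 0 = A ∧ B L.length = A' ∧
    ∀ (k : ℕ) (hk : k < L.length),
      |φ k| ≤ Real.pi / 4 ∧
      B (k + 1) =
        (rotM n (L.get ⟨k, hk⟩).1 (L.get ⟨k, hk⟩).2 (φ k)).transpose * B k *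
          rotM n (L.get ⟨k, hk⟩).1 (L.get ⟨k, hk⟩).2 (φ k) ∧
      ∀ s t : Fin n, (s : ℕ) = (L.get ⟨k, hk⟩).1 → (t : ℕ) = (L.get ⟨k, hk⟩).2 →
        B (k + 1) s t = 0

/-- `k` concatenated copies of a list. -/
def iterList {α : Type*} : ℕ → List α → List α
  | 0, _ => []
  | k + 1, L => L ++ iterList k L

/-! ### Auxiliary lemmas for Statement 13 -/

/-- entries of `L` are ordered pairs with entries below `m`. -/
def GoodL (m : ℕ) (L : List (ℕ × ℕ)) : Prop := ∀ p ∈ L, p.1 < p.2 ∧ p.2 < m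

lemma pApply_pApply (q q' : ℕ → ℕ) (L : List (ℕ × ℕ)) :
    pApply q' (pApply q L) = pApply (q' ∘ q) L := by
  unfold pApply
  rw [List.map_map]
  refine List.map_congr_left fun p _ => ?_
  by_cases h : q p.1 < q p.2
  · simp [h, Function.comp]
  · simp only [h, if_false, Function.comp]
    by_cases h1 : q' (q p.2) < q' (q p.1)
    · rw [if_pos h1, if_neg (by omega)]
    · rw [if_neg h1]
      by_cases h2 : q' (q p.1) < q' (q p.2)
      · rw [if_pos h2]
      · rw [if_neg h2]
        have : q' (q p.1) = q' (q p.2) := by omega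
        simp [this]

lemma pApply_eq_self {q : ℕ → ℕ} {L : List (ℕ × ℕ)}
    (h : ∀ p ∈ L, p.1 < p.2) (hq : ∀ p ∈ L, q p.1 = p.1 ∧ q p.2 = p.2) :
    pApply q L = L := by
  unfold pApply
  conv_rhs => rw [← List.map_id L]
  refine List.map_congr_left fun p hp => ?_
  obtain ⟨h1, h2⟩ := hq p hp
  have := h p hp
  simp [h1, h2, this]

lemma pApply_append (q : ℕ → ℕ) (l₁ l₂ : List (ℕ × ℕ)) :
    pApply q (l₁ ++ l₂) = pApply q l₁ ++ pApply q l₂ := by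
  simp [pApply]

lemma adjSwap_perm {L L' : List (ℕ × ℕ)} (h : AdjSwapG id L L') : L.Perm L' := by
  obtain ⟨l₁, l₂, a, b, _, rfl, rfl⟩ := h
  exact (List.Perm.swap b a l₂).append_left l₁

lemma shift_perm {L L' : List (ℕ × ℕ)} (h : ShiftG L L') : L.Perm L' := by
  obtain ⟨l₁, l₂, rfl, rfl⟩ := h
  exact List.perm_append_comm

lemma equiv_perm {L L' : List (ℕ × ℕ)} (h : PEquivL L L') : L.Perm L' := by
  induction h with
  | refl => exact List.Perm.refl _
  | tail _ hs ih => exact ih.trans (adjSwap_perm hs)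

lemma weak_perm {L L' : List (ℕ × ℕ)} (h : WeakEq L L') : L.Perm L' := by
  induction h with
  | refl => exact List.Perm.refl _
  | tail _ hs ih =>
      rcases hs with hs | hs
      · exact ih.trans (equiv_perm hs)
      · exact ih.trans (shift_perm hs)

lemma GoodL.of_perm {m : ℕ} {L L' : List (ℕ × ℕ)} (hp : L.Perm L') (h : GoodL m L) :
    GoodL m L' := fun p hpL => h p (hp.symm.subset hpL)

lemma IsPermOn.injOn {m : ℕ} {q : ℕ → ℕ} (h : IsPermOn m q) :
    Set.InjOn q (Set.Iio m) := h.2.1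

lemma GoodL.pApply {m : ℕ} {q : ℕ → ℕ} {L : List (ℕ × ℕ)}
    (hq : IsPermOn m q) (h : GoodL m L) : GoodL m (pApply q L) := by
  intro p hp
  obtain ⟨a, ha, rfl⟩ := List.mem_map.1 hp
  obtain ⟨h1, h2⟩ := h a ha
  have ha1 : a.1 < m := lt_trans h1 h2
  have hq1 : q a.1 < m := hq.1 ha1
  have hq2 : q a.2 < m := hq.1 h2
  have hne : q a.1 ≠ q a.2 := fun he => absurd (hq.injOn ha1 h2 he) (Nat.ne_of_lt h1)
  by_cases hc : q a.1 < q a.2 <;> simp [hc, hq1, hq2] <;> omega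

lemma mem_pair_set {a : ℕ × ℕ} {q : ℕ → ℕ} :
    ({(if q a.1 < q a.2 then (q a.1, q a.2) else (q a.2, q a.1)).1,
      (if q a.1 < q a.2 then (q a.1, q a.2) else (q a.2, q a.1)).2} : Set ℕ)
      = {q a.1, q a.2} := by
  by_cases hc : q a.1 < q a.2 <;> simp [hc, Set.pair_comm]

lemma adjSwap_pApply {m : ℕ} {q : ℕ → ℕ} {L L' : List (ℕ × ℕ)}
    (hq : IsPermOn m q) (hG : GoodL m L) (h : AdjSwapG id L L') :
    AdjSwapG id (pApply q L) (pApply q L') := by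
  obtain ⟨l₁, l₂, a, b, hdisj, rfl, rfl⟩ := h
  have haL : a ∈ l₁ ++ a :: b :: l₂ := by simp
  have hbL : b ∈ l₁ ++ a :: b :: l₂ := by simp
  obtain ⟨ha1, ha2⟩ := hG a haL
  obtain ⟨hb1, hb2⟩ := hG b hbL
  refine ⟨pApply q l₁, pApply q l₂,
    (if q a.1 < q a.2 then (q a.1, q a.2) else (q a.2, q a.1)),
    (if q b.1 < q b.2 then (q b.1, q b.2) else (q b.2, q b.1)), ?_, ?_, ?_⟩
  · simp only [id_eq] at hdisj ⊢
    rw [mem_pair_set, mem_pair_set, Set.eq_empty_iff_forall_notMem]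
    rintro x ⟨hxa, hxb⟩
    have hd : ∀ u, u ∈ ({a.1, a.2} : Set ℕ) → u ∈ ({b.1, b.2} : Set ℕ) → False :=
      fun u h1 h2 => Set.eq_empty_iff_forall_notMem.1 hdisj u ⟨h1, h2⟩
    have hxa' : x = q a.1 ∨ x = q a.2 := by simpa using hxa
    have hxb' : x = q b.1 ∨ x = q b.2 := by simpa using hxb
    have key : ∀ u v : ℕ, u < m → v < m → q u = q v → u = v := fun u v hu hv h =>
      hq.injOn hu hv h
    rcases hxa' with rfl | rfl <;> rcases hxb' with h | h
    · exact hd a.1 (by simp) (by rw [key a.1 b.1 (lt_trans ha1 ha2) (lt_trans hb1 hb2) h]; simp)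
    · exact hd a.1 (by simp) (by rw [key a.1 b.2 (lt_trans ha1 ha2) hb2 h]; simp)
    · exact hd a.2 (by simp) (by rw [key a.2 b.1 ha2 (lt_trans hb1 hb2) h]; simp)
    · exact hd a.2 (by simp) (by rw [key a.2 b.2 ha2 hb2 h]; simp)
  · rw [pApply_append]; simp [pApply]
  · rw [pApply_append]; simp [pApply]

lemma equiv_pApply {m : ℕ} {q : ℕ → ℕ} {L L' : List (ℕ × ℕ)}
    (hq : IsPermOn m q) (hG : GoodL m L) (h : PEquivL L L') :
    PEquivL (pApply q L) (pApply q L') := by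
  induction h with
  | refl => exact Relation.ReflTransGen.refl
  | tail hab hs ih =>
      exact ih.tail (adjSwap_pApply hq (hG.of_perm (equiv_perm hab)) hs)

lemma shift_pApply {q : ℕ → ℕ} {L L' : List (ℕ × ℕ)} (h : ShiftG L L') :
    ShiftG (pApply q L) (pApply q L') := by
  obtain ⟨l₁, l₂, rfl, rfl⟩ := h
  exact ⟨pApply q l₁, pApply q l₂, pApply_append q _ _, pApply_append q _ _⟩

lemma weak_pApply {m : ℕ} {q : ℕ → ℕ} {L L' : List (ℕ × ℕ)}
    (hq : IsPermOn m q) (hG : GoodL m L) (h : WeakEq L L') :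
    WeakEq (pApply q L) (pApply q L') := by
  induction h with
  | refl => exact Relation.ReflTransGen.refl
  | tail hab hs ih =>
      have hGb := hG.of_perm (weak_perm hab)
      rcases hs with hs | hs
      · exact ih.tail (Or.inl (equiv_pApply hq hGb hs))
      · exact ih.tail (Or.inr (shift_pApply hs))

lemma IsPermOn.comp {m : ℕ} {q q' : ℕ → ℕ} (h' : IsPermOn m q') (h : IsPermOn m q) :
    IsPermOn m (q' ∘ q) := Set.BijOn.comp h' h

lemma compSeq_permOn {m t : ℕ} {q : ℕ → ℕ → ℕ}
    (hq : ∀ r, 1 ≤ r → r ≤ t → IsPermOn m (q r)) : IsPermOn m (compSeq q t) := by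
  induction t with
  | zero => exact Set.bijOn_id _
  | succ n ih =>
      exact (hq (n + 1) (Nat.succ_le_succ (Nat.zero_le _)) le_rfl).comp
        (ih fun r h1 h2 => hq r h1 (h2.trans (Nat.le_succ _)))

lemma SeqOn.goodL {m : ℕ} {L : List (ℕ × ℕ)} (h : SeqOn m L) : GoodL m L := h.1

lemma SeqOn.pApply {m : ℕ} {q : ℕ → ℕ} {L : List (ℕ × ℕ)}
    (hq : IsPermOn m q) (h : SeqOn m L) : SeqOn m (pApply q L) := by
  constructor
  · exact fun p hp => (h.goodL.pApply hq) p hp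
  · intro i j hij hjm
    obtain ⟨a, ham, rfl⟩ := hq.2.2 (show i ∈ Set.Iio m from lt_trans hij hjm)
    obtain ⟨b, hbm, rfl⟩ := hq.2.2 (show j ∈ Set.Iio m from hjm)
    simp only [Set.mem_Iio] at ham hbm
    have hab : a ≠ b := fun he => by subst he; exact absurd rfl (Nat.ne_of_lt hij)
    rcases Nat.lt_or_ge a b with hlt | hge
    · have : (a, b) ∈ L := h.2 a b hlt hbm
      refine List.mem_map.2 ⟨(a, b), this, ?_⟩
      simp [hij]
    · have hlt : b < a := lt_of_le_of_ne hge (Ne.symm hab)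
      have : (b, a) ∈ L := h.2 b a hlt ham
      refine List.mem_map.2 ⟨(b, a), this, ?_⟩
      simp only
      rw [if_neg (by omega)]

/-- Proposition 2.9: a chain
`O ~w O₁ ~p O₂ ~w O₃ ~p ⋯ ~w O_{2t-1} ~p O_{2t} ~w O'` can be reduced to the
canonical forms `O ~p O₀' ~w O'` and `O ~w Õ₀ ~p O'`; moreover, if
`O_{2r} = O_{2r-1}(q_r)` then `O₀' = O(q)` and `O' = Õ₀(q)` with
`q = q_t ∘ q_{t-1} ∘ ⋯ ∘ q_1`. Here `Oseq k` denotes `O_k` (`Oseq 0 = O`,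
`Oseq (2t+1) = O'`). -/
theorem statement13 (m t : ℕ) (hm : 2 ≤ m) (ht : 1 ≤ t)
    (Oseq : ℕ → List (ℕ × ℕ)) (q : ℕ → ℕ → ℕ)
    (hseq : ∀ k ≤ 2 * t + 1, SeqOn m (Oseq k))
    (hq : ∀ r, 1 ≤ r → r ≤ t → IsPermOn m (q r))
    (hw0 : WeakEq (Oseq 0) (Oseq 1))
    (hp : ∀ r, 1 ≤ r → r ≤ t → Oseq (2 * r) = pApply (q r) (Oseq (2 * r - 1)))
    (hw : ∀ r, 1 ≤ r → r ≤ t → WeakEq (Oseq (2 * r)) (Oseq (2 * r + 1))) :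
    ∃ O₀ Ot₀ : List (ℕ × ℕ), SeqOn m O₀ ∧ SeqOn m Ot₀ ∧
      O₀ = pApply (compSeq q t) (Oseq 0) ∧ WeakEq O₀ (Oseq (2 * t + 1)) ∧
      WeakEq (Oseq 0) Ot₀ ∧ Oseq (2 * t + 1) = pApply (compSeq q t) Ot₀ := by
  have hO0 : SeqOn m (Oseq 0) := hseq 0 (by omega)
  -- the main chain-shortening claim
  have key : ∀ r ≤ t, WeakEq (pApply (compSeq q r) (Oseq 0)) (Oseq (2 * r + 1)) := by
    intro r
    induction r with
    | zero =>
        intro _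
        have : pApply (compSeq q 0) (Oseq 0) = Oseq 0 := by
          refine pApply_eq_self (fun p hp => (hO0.1 p hp).1) fun p hp => ⟨rfl, rfl⟩
        simpa [this] using hw0
    | succ n ih =>
        intro hnt
        have ihn := ih (by omega)
        have hperm : IsPermOn m (q (n + 1)) := hq (n + 1) (by omega) hnt
        have hcomp : IsPermOn m (compSeq q n) :=
          compSeq_permOn fun r h1 h2 => hq r h1 (by omega)
        have hGood : GoodL m (pApply (compSeq q n) (Oseq 0)) :=
          hO0.goodL.pApply hcomp
        have step1 : WeakEq (pApply (q (n + 1)) (pApply (compSeq q n) (Oseq 0)))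
            (pApply (q (n + 1)) (Oseq (2 * n + 1))) :=
          weak_pApply hperm hGood ihn
        rw [pApply_pApply] at step1
        have hOeq : pApply (q (n + 1)) (Oseq (2 * n + 1)) = Oseq (2 * (n + 1)) := by
          have e : 2 * (n + 1) - 1 = 2 * n + 1 := by omega
          rw [hp (n + 1) (by omega) hnt, e]
        rw [hOeq] at step1
        have step2 : WeakEq (Oseq (2 * (n + 1))) (Oseq (2 * (n + 1) + 1)) :=
          hw (n + 1) (by omega) hnt
        exact Relation.ReflTransGen.trans (by exact step1) step2
  have hQ : IsPermOn m (compSeq q t) := compSeq_permOn hq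
  have hkey := key t le_rfl
  have hO' : SeqOn m (Oseq (2 * t + 1)) := hseq (2 * t + 1) le_rfl
  -- inverse permutation
  set Q := compSeq q t with hQdef
  set Qi := Function.invFunOn Q (Set.Iio m) with hQidef
  have hinv : Set.InvOn Qi Q (Set.Iio m) (Set.Iio m) := hQ.invOn_invFunOn
  have hQi : IsPermOn m Qi :=
    hinv.symm.bijOn hQ.surjOn.mapsTo_invFunOn hQ.mapsTo
  have hO₀seq : SeqOn m (pApply Q (Oseq 0)) := hO0.pApply hQ
  refine ⟨pApply Q (Oseq 0), pApply Qi (Oseq (2 * t + 1)),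
    hO₀seq, hO'.pApply hQi, rfl, hkey, ?_, ?_⟩
  · -- WeakEq (Oseq 0) (pApply Qi (Oseq (2t+1)))
    have := weak_pApply hQi hO₀seq.goodL hkey
    rw [pApply_pApply] at this
    have heq : pApply (Qi ∘ Q) (Oseq 0) = Oseq 0 := by
      refine pApply_eq_self (fun p hp => (hO0.1 p hp).1) fun p hp => ?_
      obtain ⟨h1, h2⟩ := hO0.1 p hp
      exact ⟨hinv.1 (Set.mem_Iio.2 (lt_trans h1 h2)), hinv.1 (Set.mem_Iio.2 h2)⟩
    rwa [heq] at this
  · -- Oseq (2t+1) = pApply Q (pApply Qi (Oseq (2t+1)))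
    rw [pApply_pApply]
    symm
    refine pApply_eq_self (fun p hp => (hO'.1 p hp).1) fun p hp => ?_
    obtain ⟨h1, h2⟩ := hO'.1 p hp
    exact ⟨hinv.2 (Set.mem_Iio.2 (lt_trans h1 h2)), hinv.2 (Set.mem_Iio.2 h2)⟩
end
end BlockJacobi
end

section
/- Let π = (n_1,…,n_m) (m ≥ 2) be a partition of n, let (i,j) ∈ P_m, and let Û be an orthogonal matrix of order n_i+n_j. Then the block Jacobi annihilator R = R_ij(Û) satisfies ‖R‖₂ = 1 (spectral norm) whenever m ≥ 3, while in the case m = 2 (so that (i,j) = (1,2)) one has R = 0. -/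
namespace BlockJacobi

open scoped BigOperators

attribute [local instance] Classical.propDecidable

noncomputable section

section Helpers

variable {n m : ℕ} {c : ℕ → ℕ}

lemma off_succ (c : ℕ → ℕ) (r : ℕ) : off c (r + 1) = off c r + c r :=
  Finset.sum_range_succ c r

lemma off_mono (c : ℕ → ℕ) {a b : ℕ} (h : a ≤ b) : off c a ≤ off c b := by
  unfold off
  exact Finset.sum_le_sum_of_subset (Finset.range_subset_range.2 h)

lemma inBlk_unique {a b t : ℕ} (h1 : inBlk c a t) (h2 : inBlk c b t) : a = b := by
  rcases lt_trichotomy a b with h | h | h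
  · exfalso
    have : off c (a + 1) ≤ off c b := off_mono c h
    rw [off_succ] at this
    exact absurd (lt_of_lt_of_le h1.2 (this.trans h2.1)) (lt_irrefl t)
  · exact h
  · exfalso
    have : off c (b + 1) ≤ off c a := off_mono c h
    rw [off_succ] at this
    exact absurd (lt_of_lt_of_le h2.2 (this.trans h1.1)) (lt_irrefl t)

lemma exists_blk : ∀ (m : ℕ) {t : ℕ}, t < off c m → ∃ r < m, inBlk c r t := by
  intro m
  induction m with
  | zero => intro t ht; simp [off] at ht
  | succ k ih =>
    intro t ht
    by_cases h : t < off c k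
    · obtain ⟨r, hr, hb⟩ := ih h
      exact ⟨r, Nat.lt_succ_of_lt hr, hb⟩
    · exact ⟨k, Nat.lt_succ_self k, ⟨le_of_not_gt h, by rwa [off_succ] at ht⟩⟩

lemma sameBlk_symm {s t : ℕ} (h : sameBlk c m s t) : sameBlk c m t s := by
  obtain ⟨r, hr, h1, h2⟩ := h; exact ⟨r, hr, h2, h1⟩

end Helpers
section Helpers2

variable {n m : ℕ} {c : ℕ → ℕ}

lemma symOf_symm (a : OffI n m c → ℝ) (s t : Fin n) : symOf a t s = symOf a s t := by
  unfold symOf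
  rcases lt_trichotomy ((s:ℕ)) ((t:ℕ)) with h | h | h
  · have h' : ¬ ((t:ℕ) < (s:ℕ)) := by omega
    by_cases hsb : sameBlk c m (s:ℕ) (t:ℕ)
    · have hsb' : sameBlk c m (t:ℕ) (s:ℕ) := sameBlk_symm hsb
      rw [dif_neg (by tauto), dif_neg (by tauto), dif_neg (by tauto), dif_neg (by tauto)]
    · rw [dif_neg (by tauto), dif_pos ⟨h, hsb⟩, dif_pos ⟨h, hsb⟩]
  · have h' : ¬ ((t:ℕ) < (s:ℕ)) := by omega
    have h'' : ¬ ((s:ℕ) < (t:ℕ)) := by omega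
    rw [dif_neg (by tauto), dif_neg (by tauto), dif_neg (by tauto), dif_neg (by tauto)]
  · have h' : ¬ ((s:ℕ) < (t:ℕ)) := by omega
    by_cases hsb : sameBlk c m (t:ℕ) (s:ℕ)
    · have hsb' : sameBlk c m (s:ℕ) (t:ℕ) := sameBlk_symm hsb
      rw [dif_neg (by tauto), dif_neg (by tauto), dif_neg (by tauto), dif_neg (by tauto)]
    · rw [dif_pos ⟨h, hsb⟩, dif_neg (by tauto), dif_pos ⟨h, hsb⟩]

lemma sum_mul_single (x : OffI n m c → ℝ) (p : OffI n m c) :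
    ∑ q, x q * (Pi.single q (1:ℝ) : OffI n m c → ℝ) p = x p := by
  rw [Finset.sum_eq_single p (fun b _ hb => by rw [Pi.single_apply, if_neg (Ne.symm hb), mul_zero])
    (fun h => absurd (Finset.mem_univ p) h), Pi.single_eq_same, mul_one]

lemma symOf_sum (x : OffI n m c → ℝ) (k l : Fin n) :
    symOf x k l = ∑ q, x q * symOf (Pi.single q (1:ℝ)) k l := by
  by_cases h1 : (k:ℕ) < (l:ℕ) ∧ ¬ sameBlk c m (k:ℕ) (l:ℕ)
  · simp only [symOf, dif_pos h1, Pi.single_apply, mul_ite, mul_one, mul_zero,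
      Finset.sum_ite_eq, Finset.mem_univ, if_true]
    exact (sum_mul_single x _).symm
  · by_cases h2 : (l:ℕ) < (k:ℕ) ∧ ¬ sameBlk c m (l:ℕ) (k:ℕ)
    · simp only [symOf, dif_neg h1, dif_pos h2, Pi.single_apply, mul_ite, mul_one, mul_zero,
        Finset.sum_ite_eq, Finset.mem_univ, if_true]
      exact (sum_mul_single x _).symm
    · simp only [symOf, dif_neg h1, dif_neg h2, mul_zero, Finset.sum_const_zero]

lemma symOf_eq_sum (x : OffI n m c → ℝ) :
    symOf x = ∑ q, x q • symOf (Pi.single q (1:ℝ)) := by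
  funext s t
  rw [Matrix.sum_apply]
  simpa [Matrix.smul_apply, smul_eq_mul] using symOf_sum x s t

lemma annih_mulVec (i j : ℕ) (U : Matrix (Fin n) (Fin n) ℝ) (x : OffI n m c → ℝ)
    (p : OffI n m c) :
    (annih n m c i j U).mulVec x p
      = nij c i j (U.transpose * symOf x * U) p.1.1 p.1.2 := by
  have hconj : U.transpose * symOf x * U
      = ∑ q, x q • (U.transpose * symOf (Pi.single q (1:ℝ)) * U) := by
    rw [symOf_eq_sum, Matrix.mul_sum, Matrix.sum_mul]
    congr 1; funext q
    rw [Matrix.mul_smul, Matrix.smul_mul]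
  simp only [Matrix.mulVec, dotProduct, annih, nij]
  by_cases hC : inPiv c i j (p.1.1 : ℕ) ∧ inPiv c i j (p.1.2 : ℕ)
  · simp [hC]
  · simp only [if_neg hC, hconj, Matrix.sum_apply, Matrix.smul_apply, smul_eq_mul]
    exact Finset.sum_congr rfl fun q _ => mul_comm _ _

end Helpers2
section Helpers3

variable {n m : ℕ} {c : ℕ → ℕ}

lemma frob_sq_eq_trace (M : Matrix (Fin n) (Fin n) ℝ) :
    ∑ s, ∑ t, M s t ^ 2 = (M.transpose * M).trace := by
  simp only [Matrix.trace, Matrix.diag, Matrix.mul_apply, Matrix.transpose_apply, sq]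
  exact Finset.sum_comm

lemma frob_conj (U A : Matrix (Fin n) (Fin n) ℝ) (hUo : Orth U) :
    ∑ s, ∑ t, (U.transpose * A * U) s t ^ 2 = ∑ s, ∑ t, A s t ^ 2 := by
  have h1 : U * U.transpose = 1 := mul_eq_one_comm.mp hUo
  rw [frob_sq_eq_trace, frob_sq_eq_trace]
  have key : (U.transpose * A * U).transpose * (U.transpose * A * U)
      = U.transpose * ((A.transpose * A) * U) := by
    simp only [Matrix.transpose_mul, Matrix.transpose_transpose, Matrix.mul_assoc]
    rw [← Matrix.mul_assoc U U.transpose, h1, Matrix.one_mul]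
  rw [key, Matrix.trace_mul_comm, Matrix.mul_assoc, h1, Matrix.mul_one]

lemma sum_split (M : Matrix (Fin n) (Fin n) ℝ) (hsym : ∀ s t, M t s = M s t) :
    ∑ s : Fin n, ∑ t : Fin n, M s t ^ 2
      = 2 * (∑ p : OffI n m c, M p.1.1 p.1.2 ^ 2)
        + ∑ s : Fin n, ∑ t : Fin n, (if (s : ℕ) = (t : ℕ) ∨ sameBlk c m (s : ℕ) (t : ℕ)
            then M s t ^ 2 else 0) := by
  have hpt : ∀ z : Fin n × Fin n, M z.1 z.2 ^ 2
      = (if (z.1 : ℕ) < (z.2 : ℕ) ∧ ¬ sameBlk c m (z.1 : ℕ) (z.2 : ℕ) then M z.1 z.2 ^ 2 else 0)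
        + (if (z.2 : ℕ) < (z.1 : ℕ) ∧ ¬ sameBlk c m (z.2 : ℕ) (z.1 : ℕ) then M z.1 z.2 ^ 2 else 0)
        + (if (z.1 : ℕ) = (z.2 : ℕ) ∨ sameBlk c m (z.1 : ℕ) (z.2 : ℕ) then M z.1 z.2 ^ 2 else 0) := by
    intro z
    by_cases hsb : sameBlk c m (z.1 : ℕ) (z.2 : ℕ)
    · have hsb' : sameBlk c m (z.2 : ℕ) (z.1 : ℕ) := sameBlk_symm hsb
      rw [if_neg (by tauto), if_neg (by tauto), if_pos (by tauto)]; ring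
    · rcases lt_trichotomy ((z.1 : ℕ)) ((z.2 : ℕ)) with h | h | h
      · rw [if_pos ⟨h, hsb⟩, if_neg (by omega), if_neg (by rintro (h'|h') <;> [omega; exact hsb h'])]; ring
      · rw [if_neg (by omega), if_neg (by omega), if_pos (Or.inl h)]; ring
      · have hsb'' : ¬ sameBlk c m (z.2 : ℕ) (z.1 : ℕ) := fun hh => hsb (sameBlk_symm hh)
        rw [if_neg (by omega), if_pos ⟨h, hsb''⟩, if_neg (by rintro (h'|h') <;> [omega; exact hsb h'])]; ring
  have e1 : ∑ s : Fin n, ∑ t : Fin n, M s t ^ 2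
      = ∑ z : Fin n × Fin n, M z.1 z.2 ^ 2 := (Finset.sum_product' _ _ _).symm
  rw [e1, Finset.sum_congr rfl (fun z _ => hpt z), Finset.sum_add_distrib,
    Finset.sum_add_distrib]
  have e2 : ∑ z : Fin n × Fin n,
      (if (z.1 : ℕ) < (z.2 : ℕ) ∧ ¬ sameBlk c m (z.1 : ℕ) (z.2 : ℕ) then M z.1 z.2 ^ 2 else 0)
      = ∑ p : OffI n m c, M p.1.1 p.1.2 ^ 2 := by
    rw [← Finset.sum_filter]
    refine Finset.sum_bij (fun z hz => (⟨z, (Finset.mem_filter.mp hz).2⟩ : OffI n m c))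
      (fun z hz => Finset.mem_univ _) ?_ ?_ ?_
    · intro a ha b hb h
      exact congrArg Subtype.val h
    · intro p _
      exact ⟨p.1, Finset.mem_filter.mpr ⟨Finset.mem_univ _, p.2⟩, Subtype.ext rfl⟩
    · intro z hz; rfl
  have e3 : ∑ z : Fin n × Fin n,
      (if (z.2 : ℕ) < (z.1 : ℕ) ∧ ¬ sameBlk c m (z.2 : ℕ) (z.1 : ℕ) then M z.1 z.2 ^ 2 else 0)
      = ∑ p : OffI n m c, M p.1.1 p.1.2 ^ 2 := by
    rw [← Finset.sum_filter]
    refine Finset.sum_bij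
      (fun z hz => (⟨(z.2, z.1), (Finset.mem_filter.mp hz).2⟩ : OffI n m c))
      (fun z hz => Finset.mem_univ _) ?_ ?_ ?_
    · intro a ha b hb h
      have := congrArg Subtype.val h
      simp only [Prod.mk.injEq] at this
      exact Prod.ext this.2 this.1
    · intro p _
      refine ⟨(p.1.2, p.1.1), Finset.mem_filter.mpr ⟨Finset.mem_univ _, p.2⟩, ?_⟩
      exact Subtype.ext (by simp [Prod.mk.eta])
    · intro z hz
      exact (hsym z.2 z.1) ▸ rfl
  rw [e2, e3, ← Finset.sum_product', Finset.univ_product_univ]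
  ring

lemma frob_symOf (x : OffI n m c → ℝ) :
    ∑ s, ∑ t, symOf x s t ^ 2 = 2 * ∑ q, x q ^ 2 := by
  rw [sum_split (symOf x) (symOf_symm x)]
  have h1 : ∀ p : OffI n m c, symOf x p.1.1 p.1.2 = x p := by
    intro p
    have hp := p.2
    simp only [symOf, dif_pos hp]
    congr 1
  have h2 : ∀ s t : Fin n, ((s : ℕ) = (t : ℕ) ∨ sameBlk c m (s : ℕ) (t : ℕ)) →
      symOf x s t = 0 := by
    intro s t h
    rcases h with h | h
    · simp only [symOf, dif_neg (by rintro ⟨hlt, -⟩; omega : ¬ ((s:ℕ) < (t:ℕ) ∧ ¬ sameBlk c m (s:ℕ) (t:ℕ))),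
        dif_neg (by rintro ⟨hlt, -⟩; omega : ¬ ((t:ℕ) < (s:ℕ) ∧ ¬ sameBlk c m (t:ℕ) (s:ℕ)))]
    · have h' := sameBlk_symm h
      simp only [symOf, dif_neg (by tauto : ¬ ((s:ℕ) < (t:ℕ) ∧ ¬ sameBlk c m (s:ℕ) (t:ℕ))),
        dif_neg (by tauto : ¬ ((t:ℕ) < (s:ℕ) ∧ ¬ sameBlk c m (t:ℕ) (s:ℕ)))]
  have : ∑ s : Fin n, ∑ t : Fin n,
      (if (s : ℕ) = (t : ℕ) ∨ sameBlk c m (s : ℕ) (t : ℕ) then symOf x s t ^ 2 else 0) = 0 := by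
    refine Finset.sum_eq_zero fun s _ => Finset.sum_eq_zero fun t _ => ?_
    split_ifs with h
    · rw [h2 s t h]; ring
    · rfl
  rw [this, add_zero]
  simp only [h1]

end Helpers3
section Helpers4

variable {n m : ℕ} {c : ℕ → ℕ}

lemma symOf_single (q : OffI n m c) (k l : Fin n) :
    symOf (Pi.single q (1:ℝ)) k l
      = (if k = q.1.1 ∧ l = q.1.2 then (1:ℝ) else 0)
        + (if k = q.1.2 ∧ l = q.1.1 then (1:ℝ) else 0) := by
  have hq := q.2
  have hqlt : ((q.1.1 : Fin n) : ℕ) < ((q.1.2 : Fin n) : ℕ) := hq.1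
  by_cases h1 : (k:ℕ) < (l:ℕ) ∧ ¬ sameBlk c m (k:ℕ) (l:ℕ)
  · simp only [symOf, dif_pos h1, Pi.single_apply]
    have he : ((⟨(k,l), h1⟩ : OffI n m c) = q) ↔ (k = q.1.1 ∧ l = q.1.2) := by
      exact Subtype.ext_iff.trans Prod.ext_iff
    have h2 : ¬ (k = q.1.2 ∧ l = q.1.1) := by
      rintro ⟨rfl, rfl⟩
      have := h1.1
      omega
    rw [if_neg h2, add_zero]
    by_cases hkq : k = q.1.1 ∧ l = q.1.2
    · rw [if_pos hkq]; exact (congrArg (Pi.single q (1:ℝ)) (he.mpr hkq)).trans (Pi.single_eq_same q 1)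
    · rw [if_neg hkq]; exact (Pi.single_apply q (1:ℝ) (⟨(k,l), h1⟩ : OffI n m c)).trans (if_neg (fun hh => hkq (he.mp hh)))
  · by_cases h2 : (l:ℕ) < (k:ℕ) ∧ ¬ sameBlk c m (l:ℕ) (k:ℕ)
    · simp only [symOf, dif_neg h1, dif_pos h2, Pi.single_apply]
      have he : ((⟨(l,k), h2⟩ : OffI n m c) = q) ↔ (l = q.1.1 ∧ k = q.1.2) := by
        exact Subtype.ext_iff.trans Prod.ext_iff
      have h3 : ¬ (k = q.1.1 ∧ l = q.1.2) := by
        rintro ⟨rfl, rfl⟩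
        have := h2.1
        omega
      rw [if_neg h3, zero_add]
      have he' : ((⟨(l,k), h2⟩ : OffI n m c) = q) ↔ (k = q.1.2 ∧ l = q.1.1) :=
        he.trans and_comm
      by_cases hkq : k = q.1.2 ∧ l = q.1.1
      · rw [if_pos hkq]; exact (congrArg (Pi.single q (1:ℝ)) (he'.mpr hkq)).trans (Pi.single_eq_same q 1)
      · rw [if_neg hkq]; exact (Pi.single_apply q (1:ℝ) (⟨(l,k), h2⟩ : OffI n m c)).trans (if_neg (fun hh => hkq (he'.mp hh)))
    · have h3 : ¬ (k = q.1.1 ∧ l = q.1.2) := by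
        rintro ⟨rfl, rfl⟩; exact h1 ⟨hq.1, hq.2⟩
      have h4 : ¬ (k = q.1.2 ∧ l = q.1.1) := by
        rintro ⟨rfl, rfl⟩; exact h2 ⟨hq.1, hq.2⟩
      simp only [symOf, dif_neg h1, dif_neg h2, if_neg h3, if_neg h4, add_zero]

lemma conj_single (U : Matrix (Fin n) (Fin n) ℝ) (q : OffI n m c) (s t : Fin n) :
    (U.transpose * symOf (Pi.single q (1:ℝ)) * U) s t
      = U q.1.1 s * U q.1.2 t + U q.1.2 s * U q.1.1 t := by
  have hne : q.1.1 ≠ q.1.2 := by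
    have := q.2.1
    intro h; rw [h] at this; omega
  rw [Matrix.mul_apply]
  have inner : ∀ k : Fin n, (U.transpose * symOf (Pi.single q (1:ℝ))) s k
      = U q.1.1 s * (if k = q.1.2 then 1 else 0)
        + U q.1.2 s * (if k = q.1.1 then 1 else 0) := by
    intro k
    rw [Matrix.mul_apply]
    simp only [Matrix.transpose_apply, symOf_single, ite_and, mul_add, mul_ite, mul_one,
      mul_zero, Finset.sum_add_distrib, Finset.sum_ite_eq', Finset.mem_univ, if_true]
  simp only [inner, add_mul, ite_mul, one_mul, zero_mul, mul_ite, mul_zero,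
    Finset.sum_add_distrib, Finset.sum_ite_eq', Finset.mem_univ, if_true]
  ring

lemma symOf_conj_symm (U : Matrix (Fin n) (Fin n) ℝ) (x : OffI n m c → ℝ) (s t : Fin n) :
    (U.transpose * symOf x * U) t s = (U.transpose * symOf x * U) s t := by
  have hAsym : (symOf x).transpose = symOf x := by
    funext a b
    rw [Matrix.transpose_apply]
    exact symOf_symm x a b
  have hBt : (U.transpose * symOf x * U).transpose = U.transpose * symOf x * U := by
    simp only [Matrix.transpose_mul, Matrix.transpose_transpose, hAsym]
    rw [Matrix.mul_assoc]
  calc (U.transpose * symOf x * U) t s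
      = (U.transpose * symOf x * U).transpose s t := (Matrix.transpose_apply _ _ _).symm
    _ = (U.transpose * symOf x * U) s t := by rw [hBt]

lemma mulVec_sq_le {i j : ℕ} (U : Matrix (Fin n) (Fin n) ℝ) (hUo : Orth U)
    (x : OffI n m c → ℝ) :
    ∑ p : OffI n m c, ((annih n m c i j U).mulVec x p) ^ 2 ≤ ∑ q, x q ^ 2 := by
  set B := U.transpose * symOf x * U with hB
  have h1 : ∑ p : OffI n m c, ((annih n m c i j U).mulVec x p) ^ 2
      = ∑ p : OffI n m c, (nij c i j B p.1.1 p.1.2) ^ 2 := by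
    refine Finset.sum_congr rfl fun p _ => ?_
    rw [annih_mulVec]
  have h2 : ∑ p : OffI n m c, (nij c i j B p.1.1 p.1.2) ^ 2
      ≤ ∑ p : OffI n m c, (B p.1.1 p.1.2) ^ 2 := by
    refine Finset.sum_le_sum fun p _ => ?_
    unfold nij
    split_ifs
    · simpa using sq_nonneg (B p.1.1 p.1.2)
    · exact le_refl _
  have h3 : 2 * (∑ p : OffI n m c, (B p.1.1 p.1.2) ^ 2) ≤ ∑ s, ∑ t, B s t ^ 2 := by
    rw [sum_split B (symOf_conj_symm U x)]
    have : (0:ℝ) ≤ ∑ s : Fin n, ∑ t : Fin n,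
        (if (s : ℕ) = (t : ℕ) ∨ sameBlk c m (s : ℕ) (t : ℕ) then B s t ^ 2 else 0) := by
      refine Finset.sum_nonneg fun s _ => Finset.sum_nonneg fun t _ => ?_
      split_ifs
      · positivity
      · exact le_refl _
    linarith
  have h4 : ∑ s, ∑ t, B s t ^ 2 = 2 * ∑ q, x q ^ 2 := by
    rw [hB, frob_conj U (symOf x) hUo, frob_symOf]
  rw [h1]
  linarith [h2, h3, h4]

lemma enorm_single (q : OffI n m c) : enorm (Pi.single q (1:ℝ)) = 1 := by
  unfold enorm
  have h2 : ∀ q' : OffI n m c, ((Pi.single q (1:ℝ) : OffI n m c → ℝ) q') ^ 2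
      = if q' = q then (1:ℝ) else 0 := by
    intro q'
    rw [Pi.single_apply]
    split_ifs <;> norm_num
  rw [Finset.sum_congr rfl fun q' _ => h2 q',
    Finset.sum_ite_eq' Finset.univ q (fun _ => (1:ℝ)), if_pos (Finset.mem_univ q),
    Real.sqrt_one]

end Helpers4
section Helpers5

variable {n m : ℕ} {c : ℕ → ℕ}

lemma sum_single_sq (q : OffI n m c) :
    ∑ q' : OffI n m c, ((Pi.single q (1:ℝ) : OffI n m c → ℝ) q') ^ 2 = 1 := by
  have h2 : ∀ q' : OffI n m c, ((Pi.single q (1:ℝ) : OffI n m c → ℝ) q') ^ 2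
      = if q' = q then (1:ℝ) else 0 := by
    intro q'
    rw [Pi.single_apply]
    split_ifs <;> norm_num
  rw [Finset.sum_congr rfl fun q' _ => h2 q',
    Finset.sum_ite_eq' Finset.univ q (fun _ => (1:ℝ)), if_pos (Finset.mem_univ q)]

lemma col_sq_aux {i j : ℕ} (U : Matrix (Fin n) (Fin n) ℝ)
    (hUe : IsElem c i j U) (hUo : Orth U)
    (q : OffI n m c) (u v : Fin n)
    (huv : (u, v) = q.1 ∨ (v, u) = q.1)
    (hu : ¬ inPiv c i j (u : ℕ)) :
    ∑ p : OffI n m c, ((annih n m c i j U) p q) ^ 2 = 1 := by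
  set B := U.transpose * symOf (Pi.single q (1:ℝ)) * U with hBdef
  have hBform : ∀ s t : Fin n, B s t = U u s * U v t + U v s * U u t := by
    intro s t
    rcases huv with h | h
    · have h1 : u = q.1.1 := congrArg Prod.fst h
      have h2 : v = q.1.2 := congrArg Prod.snd h
      rw [hBdef, conj_single, ← h1, ← h2]
    · have h1 : v = q.1.1 := congrArg Prod.fst h
      have h2 : u = q.1.2 := congrArg Prod.snd h
      rw [hBdef, conj_single, ← h1, ← h2]
      ring
  have hsb : ¬ sameBlk c m (u : ℕ) (v : ℕ) := by
    rcases huv with h | h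
    · have h1 : u = q.1.1 := congrArg Prod.fst h
      have h2 : v = q.1.2 := congrArg Prod.snd h
      rw [h1, h2]; exact q.2.2
    · have h1 : v = q.1.1 := congrArg Prod.fst h
      have h2 : u = q.1.2 := congrArg Prod.snd h
      rw [h1, h2]; exact fun hs => q.2.2 (sameBlk_symm hs)
  have huvne : u ≠ v := by
    intro hequ
    have hval := congrArg Fin.val hequ
    have hlt := q.2.1
    rcases huv with h | h
    · rw [← h] at hlt
      have h2 : (u:ℕ) < (v:ℕ) := hlt
      omega
    · rw [← h] at hlt
      have h2 : (v:ℕ) < (u:ℕ) := hlt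
      omega
  have hUu : ∀ s : Fin n, U u s = if u = s then 1 else 0 :=
    fun s => hUe u s (fun hh => hu hh.1)
  have hUu' : ∀ s : Fin n, U s u = if s = u then 1 else 0 :=
    fun s => hUe s u (fun hh => hu hh.2)
  have hvu : U v u = 0 := by rw [hUu' v, if_neg (fun hh => huvne hh.symm)]
  have Z2 : ∀ s : Fin n, B s s = 0 := by
    intro s
    by_cases hs : s = u
    · rw [hs, hBform, hvu]; ring
    · rw [hBform, hUu s, if_neg (fun hh => hs hh.symm)]; ring
  have Zv : ∀ w : Fin n, sameBlk c m (u : ℕ) (w : ℕ) → w ≠ u → U v w = 0 := by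
    intro w hsb₀ hwu
    obtain ⟨r, hrm, h1, h2⟩ := hsb₀
    have hnp : ¬ inPiv c i j (w : ℕ) := by
      rintro (h | h)
      · exact hu (Or.inl ((inBlk_unique h2 h) ▸ h1))
      · exact hu (Or.inr ((inBlk_unique h2 h) ▸ h1))
    have hvw : v ≠ w := by
      intro hh
      exact hsb ⟨r, hrm, h1, hh ▸ h2⟩
    rw [hUe v w (fun hh => hnp hh.2), if_neg hvw]
  have ZsB : ∀ s t : Fin n, sameBlk c m (s : ℕ) (t : ℕ) → B s t = 0 := by
    intro s t hsb₀
    by_cases hs : s = u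
    · by_cases ht : t = u
      · rw [hs, ht]; exact Z2 u
      · rw [hs, hBform, Zv t (hs ▸ hsb₀) ht, hvu]; ring
    · by_cases ht : t = u
      · rw [ht, hBform, Zv s (sameBlk_symm (ht ▸ hsb₀)) hs, hvu]; ring
      · rw [hBform, hUu s, if_neg (fun hh => hs hh.symm), hUu t,
          if_neg (fun hh => ht hh.symm)]; ring
  have Zpiv : ∀ s t : Fin n, inPiv c i j (s : ℕ) → inPiv c i j (t : ℕ) → B s t = 0 := by
    intro s t hps hpt
    have hsu : s ≠ u := fun hh => hu (hh ▸ hps)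
    have htu : t ≠ u := fun hh => hu (hh ▸ hpt)
    rw [hBform, hUu s, if_neg (fun hh => hsu hh.symm), hUu t,
      if_neg (fun hh => htu hh.symm)]; ring
  have hnij : ∀ s t : Fin n, nij c i j B s t = B s t := by
    intro s t
    unfold nij
    split_ifs with h
    · exact (Zpiv s t h.1 h.2).symm
    · rfl
  have hcol : ∀ p : OffI n m c, (annih n m c i j U) p q = B p.1.1 p.1.2 := by
    intro p
    show nij c i j B p.1.1 p.1.2 = B p.1.1 p.1.2
    exact hnij _ _
  have hfs : ∑ s, ∑ t, B s t ^ 2 = 2 := by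
    rw [hBdef, frob_conj _ _ hUo, frob_symOf, sum_single_sq, mul_one]
  have hBsym : ∀ s t : Fin n, B t s = B s t := symOf_conj_symm U _
  have hsplit := sum_split (c := c) (m := m) B hBsym
  have hrest : ∑ s : Fin n, ∑ t : Fin n,
      (if (s : ℕ) = (t : ℕ) ∨ sameBlk c m (s : ℕ) (t : ℕ) then B s t ^ 2 else 0) = 0 := by
    refine Finset.sum_eq_zero fun s _ => Finset.sum_eq_zero fun t _ => ?_
    split_ifs with h
    · rcases h with h | h
      · have : s = t := Fin.ext h
        rw [this, Z2 t]; ring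
      · rw [ZsB s t h]; ring
    · rfl
  rw [Finset.sum_congr rfl fun p _ => by rw [hcol p]]
  rw [hfs, hrest, add_zero] at hsplit
  linarith

end Helpers5

/-- from Theorem 2.12: the block Jacobi annihilator `R = R_{ij}(Û)`
(here parametrized by the orthogonal elementary block matrix `U` with pivot pair
`(i,j)` and pivot submatrix `Û`) satisfies `‖R‖₂ = 1` when `m ≥ 3`, while for
`m = 2` (so `(i,j) = (1,2)`) one has `R = 0`. -/
theorem statement14 (n m : ℕ) (c : ℕ → ℕ) (hpart : IsPartition n m c)
    (i j : ℕ) (hij : i < j) (hj : j < m)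
    (U : Matrix (Fin n) (Fin n) ℝ) (hUe : IsElem c i j U) (hUo : Orth U) :
    (3 ≤ m → specNorm (annih n m c i j U) = 1) ∧
    (m = 2 → annih n m c i j U = 0) := by
  obtain ⟨hm2, hc, hsum⟩ := hpart
  have hoffm : off c m = n := hsum
  have him : i < m := lt_trans hij hj
  constructor
  · intro hm3
    set r : ℕ := if 0 < i then 0 else if 1 < j then 1 else 2 with hrdef
    have hr : r < m ∧ r ≠ i ∧ r ≠ j := by
      rw [hrdef]; split_ifs <;> omega
    have hcr := hc r hr.1
    have hci := hc i him
    have hur : off c r + c r ≤ n := by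
      have := off_mono c (show r + 1 ≤ m from hr.1)
      rw [off_succ] at this; omega
    have hui : off c i + c i ≤ n := by
      have := off_mono c (show i + 1 ≤ m from him)
      rw [off_succ] at this; omega
    have hu0 : off c r < n := by omega
    have hv0 : off c i < n := by omega
    set u : Fin n := ⟨off c r, hu0⟩ with hudef
    set v : Fin n := ⟨off c i, hv0⟩ with hvdef
    have hbu : inBlk c r (u : ℕ) := ⟨le_refl _, by show off c r < off c r + c r; omega⟩
    have hbv : inBlk c i (v : ℕ) := ⟨le_refl _, by show off c i < off c i + c i; omega⟩
    have hnsb : ¬ sameBlk c m (u : ℕ) (v : ℕ) := by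
      rintro ⟨r', hr', h1, h2⟩
      have e1 := inBlk_unique h1 hbu
      have e2 := inBlk_unique h2 hbv
      exact hr.2.1 (e1 ▸ e2)
    have hnpu : ¬ inPiv c i j (u : ℕ) := by
      rintro (h | h)
      · exact hr.2.1 (inBlk_unique hbu h)
      · exact hr.2.2 (inBlk_unique hbu h)
    have hne : (u : ℕ) ≠ (v : ℕ) := by
      intro h
      exact hnsb ⟨i, him, by rw [h]; exact hbv, hbv⟩
    obtain ⟨q, hq⟩ : ∃ q : OffI n m c, (u, v) = q.1 ∨ (v, u) = q.1 := by
      rcases lt_or_gt_of_ne hne with hlt | hlt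
      · exact ⟨⟨(u, v), ⟨hlt, hnsb⟩⟩, Or.inl rfl⟩
      · exact ⟨⟨(v, u), ⟨hlt, fun hs => hnsb (sameBlk_symm hs)⟩⟩, Or.inr rfl⟩
    unfold specNorm
    set R := annih n m c i j U with hRdef
    have hub : ∀ w ∈ {w : ℝ | ∃ x, enorm x = 1 ∧ enorm (R.mulVec x) = w}, w ≤ 1 := by
      rintro w ⟨x, hx, rfl⟩
      have hx2 : ∑ q', x q' ^ 2 = 1 := by
        unfold enorm at hx
        have hnn : 0 ≤ ∑ q', x q' ^ 2 := Finset.sum_nonneg fun _ _ => sq_nonneg _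
        nlinarith [Real.sq_sqrt hnn]
      have hle := mulVec_sq_le (i := i) (j := j) U hUo x
      rw [hx2] at hle
      unfold enorm
      calc Real.sqrt (∑ p, (R.mulVec x p) ^ 2) ≤ Real.sqrt 1 := Real.sqrt_le_sqrt hle
        _ = 1 := Real.sqrt_one
    have hmem : (1:ℝ) ∈ {w : ℝ | ∃ x, enorm x = 1 ∧ enorm (R.mulVec x) = w} := by
      refine ⟨Pi.single q 1, enorm_single q, ?_⟩
      have hcol : ∀ p, R.mulVec (Pi.single q 1) p = R p q := by
        intro p
        simp [Matrix.mulVec, dotProduct, Pi.single_apply, mul_ite, mul_one,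
          mul_zero, Finset.sum_ite_eq']
      unfold enorm
      rw [Finset.sum_congr rfl fun p _ => by rw [hcol p]]
      rw [hRdef] at *
      rw [col_sq_aux U hUe hUo q u v hq hnpu, Real.sqrt_one]
    exact le_antisymm (csSup_le ⟨1, hmem⟩ hub) (le_csSup ⟨1, hub⟩ hmem)
  · intro hm2'
    subst hm2'
    have hi0 : i = 0 := by omega
    have hj1 : j = 1 := by omega
    subst hi0; subst hj1
    have hall : ∀ t : Fin n, inPiv c 0 1 (t : ℕ) := by
      intro t
      have htn : (t : ℕ) < off c 2 := by rw [hoffm]; exact t.2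
      obtain ⟨r', hr', hb⟩ := exists_blk 2 htn
      have : r' = 0 ∨ r' = 1 := by omega
      rcases this with h | h
      · exact Or.inl (h ▸ hb)
      · exact Or.inr (h ▸ hb)
    refine Matrix.ext fun p q' => ?_
    rw [Matrix.zero_apply]
    show nij c 0 1 _ p.1.1 p.1.2 = 0
    unfold nij
    rw [if_pos ⟨hall p.1.1, hall p.1.2⟩]
end
end BlockJacobi
end
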